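/- arXiv:1510.02637 — 2 statements merged into one kernel-verified Lean document; each statement's English description precedes it below -/
import Mathlib

section
/- If w is a self-minimal word of length n ≥ 1 over Σ, then n · Lynd(w) = Σ_{d | n} μ(n/d) · |CS(w_(d))|, where the sum (taken over the positive divisors d of n, with integer values since μ takes negative values) equals n times the number of Lyndon words of length n that are lexicographically ≤ w. -/
namespace Lyndon

variable {α : Type*}

/-- `rot w c` is the cyclic rotation of `w` obtained by moving its first `c mod |w|`
letters to the end. -/
def rot (w : List α) (c : ℕ) : List α :=
  w.drop (c % w.length) ++ w.take (c % w.length)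

/-- `power w k` is the concatenation of `k` copies of `w`. -/
def power (w : List α) (k : ℕ) : List α := (List.replicate k w).flatten

/-- `minrot w` is the lexicographically minimal cyclic rotation of `w`. -/
def minrot [LinearOrder α] (w : List α) : List α :=
  ((List.range w.length).map (rot w)).foldr min w

/-- A word is self-minimal if it equals its minimal cyclic rotation. -/
def SelfMinimal [LinearOrder α] (w : List α) : Prop := minrot w = w

/-- A word is primitive if it is a `k`-th power (for a positive integer `k`)
only of itself. -/
def Primitive (w : List α) : Prop :=
  ∀ (u : List α) (k : ℕ), 0 < k → w = power u k → u = w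

/-- A Lyndon word is a nonempty word that is primitive and self-minimal. -/
def IsLyndon [LinearOrder α] (w : List α) : Prop :=
  w ≠ [] ∧ Primitive w ∧ SelfMinimal w

/-- `Pref₋(w)`: the words `w_(i)·s` for `0 ≤ i ≤ n-1` and a letter `s < w[i+1]`,
together with `w` itself. -/
def PrefMinus [LinearOrder α] (w : List α) : Set (List α) :=
  {y | (∃ i : Fin w.length, ∃ s : α, s < w.get i ∧ y = w.take i ++ [s]) ∨ y = w}

/-- `L(w)`: the words containing a factor (contiguous subword) from `Pref₋(w)`. -/
def InL [LinearOrder α] (w x : List α) : Prop :=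
  ∃ y ∈ PrefMinus w, y <:+: x

/-! ### Basic lemmas about `rot` and `power` -/

theorem rot_eq_rotate (w : List α) (c : ℕ) : rot w c = w.rotate c :=
  List.rotate_eq_drop_append_take_mod.symm

@[simp] theorem length_rot (w : List α) (c : ℕ) : (rot w c).length = w.length := by
  rw [rot_eq_rotate]; exact List.length_rotate w c

theorem rot_zero (w : List α) : rot w 0 = w := by
  rw [rot_eq_rotate, List.rotate_zero]

theorem rot_rot (w : List α) (a b : ℕ) : rot (rot w a) b = rot w (a + b) := by
  simp only [rot_eq_rotate, List.rotate_rotate]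

theorem rot_mod (w : List α) (c : ℕ) : rot w (c % w.length) = rot w c := by
  simp only [rot_eq_rotate, List.rotate_mod]

theorem rot_nil (c : ℕ) : rot ([] : List α) c = [] := by simp [rot]

theorem exists_rot_inv (w : List α) (c : ℕ) : ∃ m, rot (rot w c) m = w := by
  rcases eq_or_ne w [] with rfl | hw
  · exact ⟨0, by simp [rot_nil]⟩
  · have hL : 0 < w.length := List.length_pos_iff.2 hw
    refine ⟨w.length - c % w.length, ?_⟩
    rw [rot_rot, ← rot_mod]
    have hc : c % w.length < w.length := Nat.mod_lt _ hL
    have hsum : c % w.length + (w.length - c % w.length) = w.length := by omega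
    have h0 : (c + (w.length - c % w.length)) % w.length = 0 := by
      rw [← Nat.mod_add_mod, hsum, Nat.mod_self]
    rw [h0, rot_zero]

theorem power_zero (u : List α) : power u 0 = [] := rfl

theorem power_succ (u : List α) (k : ℕ) : power u (k + 1) = u ++ power u k := by
  simp [power, List.replicate_succ]

theorem power_one (u : List α) : power u 1 = u := by simp [power]

theorem power_add (u : List α) (a b : ℕ) : power u (a + b) = power u a ++ power u b := by
  unfold power
  rw [List.replicate_add, List.flatten_append]

theorem power_succ' (u : List α) (k : ℕ) : power u (k + 1) = power u k ++ u := by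
  rw [power_add, power_one]

@[simp] theorem length_power (u : List α) (k : ℕ) : (power u k).length = k * u.length := by
  induction k with
  | zero => simp [power_zero]
  | succ k ih => rw [power_succ, List.length_append, ih]; ring

theorem power_nil (k : ℕ) : power ([] : List α) k = [] := by
  induction k with
  | zero => rfl
  | succ k ih => rw [power_succ, ih]; rfl

theorem power_ne_nil {u : List α} {k : ℕ} (hu : u ≠ []) (hk : 0 < k) : power u k ≠ [] := by
  intro h
  have := congrArg List.length h
  rw [length_power] at this
  simp only [List.length_nil] at this
  rcases Nat.mul_eq_zero.mp this with h | h
  · omega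
  · exact hu (List.length_eq_zero_iff.mp h)

theorem power_power (u : List α) (a b : ℕ) : power (power u a) b = power u (b * a) := by
  induction b with
  | zero => simp [power_zero]
  | succ b ih => rw [power_succ, ih, Nat.succ_mul, Nat.add_comm, power_add]

theorem take_power {u : List α} {k : ℕ} (hk : 0 < k) : (power u k).take u.length = u := by
  obtain ⟨k, rfl⟩ := Nat.exists_eq_succ_of_ne_zero hk.ne'
  rw [power_succ, List.take_left]

theorem getElem?_power {u : List α} {k i : ℕ} (hu : 0 < u.length) (hi : i < k * u.length) :
    (power u k)[i]? = u[i % u.length]? := by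
  induction k generalizing i with
  | zero => omega
  | succ k ih =>
    rw [power_succ]
    rcases lt_or_ge i u.length with h | h
    · rw [List.getElem?_append, if_pos h, Nat.mod_eq_of_lt h]
    · rw [List.getElem?_append, if_neg (by omega)]
      have hi' : i - u.length < k * u.length := by
        have : (k + 1) * u.length = k * u.length + u.length := by ring
        omega
      rw [ih hi']
      congr 1
      conv_rhs => rw [← Nat.sub_add_cancel h]
      rw [Nat.add_mod_right]

theorem rot_power (u : List α) (k c : ℕ) : rot (power u k) c = power (rot u c) k := by
  rcases eq_or_ne u [] with rfl | hu
  · simp [power_nil, rot_nil]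
  rcases Nat.eq_zero_or_pos k with rfl | hk
  · simp [power_zero, rot_nil]
  have hu' : 0 < u.length := List.length_pos_iff.2 hu
  have hkL : 0 < k * u.length := by positivity
  apply List.ext_getElem?
  intro i
  rcases lt_or_ge i (k * u.length) with hi | hi
  · rw [rot_eq_rotate, List.getElem?_rotate (by rw [length_power]; exact hi)]
    rw [length_power]
    rw [getElem?_power hu' (Nat.mod_lt _ hkL)]
    rw [Nat.mod_mod_of_dvd _ (dvd_mul_left u.length k)]
    rw [getElem?_power (by rw [length_rot]; exact hu') (by rw [length_rot]; exact hi)]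
    rw [length_rot, rot_eq_rotate, List.getElem?_rotate (Nat.mod_lt _ hu'), Nat.mod_add_mod]
  · rw [List.getElem?_eq_none, List.getElem?_eq_none]
    · rw [length_power, length_rot]; exact hi
    · rw [length_rot, length_power]; exact hi

/-! ### Lexicographic order lemmas -/

section Order
variable [LinearOrder α]

theorem lex_append_of_length_eq : ∀ {u v : List α}, u.length = v.length →
    List.Lex (· < ·) u v → ∀ (a b : List α), List.Lex (· < ·) (u ++ a) (v ++ b)
  | _, _, hl, List.Lex.nil, a, b => by simp at hl
  | _, _, _, List.Lex.rel h, a, b => List.Lex.rel h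
  | _, _, hl, List.Lex.cons h, a, b =>
    List.Lex.cons (lex_append_of_length_eq (by simpa using hl) h a b)

theorem lt_append_of_lt {u v : List α} (hl : u.length = v.length) (h : u < v)
    (a b : List α) : u ++ a < v ++ b :=
  lex_append_of_length_eq hl h a b

theorem le_append_of_le {u v a b : List α} (hl : u.length = v.length) (h : u ≤ v)
    (hab : a ≤ b) : u ++ a ≤ v ++ b := by
  rcases lt_or_eq_of_le h with h | rfl
  · exact le_of_lt (lt_append_of_lt hl h a b)
  · rcases lt_or_eq_of_le hab with h | rfl
    · exact le_of_lt (List.Lex.append_left _ h u)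
    · exact le_refl _

theorem power_le_power {u v : List α} (hl : u.length = v.length) (h : u ≤ v) (k : ℕ) :
    power u k ≤ power v k := by
  induction k with
  | zero => exact le_refl _
  | succ k ih => rw [power_succ, power_succ]; exact le_append_of_le hl h ih

theorem power_lt_power {u v : List α} (hl : u.length = v.length) (h : u < v) {k : ℕ}
    (hk : 0 < k) : power u k < power v k := by
  obtain ⟨k, rfl⟩ := Nat.exists_eq_succ_of_ne_zero hk.ne'
  rw [power_succ, power_succ]
  exact lt_append_of_lt hl h _ _

/-! ### `minrot` lemmas -/

theorem foldr_min_le_init {β : Type*} [LinearOrder β] (l : List β) (b : β) :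
    l.foldr min b ≤ b := by
  induction l with
  | nil => exact le_refl _
  | cons a l ih => exact le_trans (min_le_right _ _) ih

theorem foldr_min_le_mem {β : Type*} [LinearOrder β] {l : List β} {a : β} (b : β)
    (h : a ∈ l) : l.foldr min b ≤ a := by
  induction l with
  | nil => simp at h
  | cons c l ih =>
    rcases List.mem_cons.mp h with rfl | h
    · exact min_le_left _ _
    · exact le_trans (min_le_right _ _) (ih h)

theorem foldr_min_mem {β : Type*} [LinearOrder β] (l : List β) (b : β) :
    l.foldr min b = b ∨ l.foldr min b ∈ l := by
  induction l with
  | nil => exact Or.inl rfl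
  | cons a l ih =>
    rcases min_choice a (l.foldr min b) with h | h
    · exact Or.inr (by rw [List.foldr_cons, h]; exact List.mem_cons_self)
    · rcases ih with h' | h'
      · exact Or.inl (by rw [List.foldr_cons, h, h'])
      · exact Or.inr (by rw [List.foldr_cons, h]; exact List.mem_cons_of_mem _ h')

theorem minrot_le_self (x : List α) : minrot x ≤ x := foldr_min_le_init _ _

theorem minrot_le_rot (x : List α) (c : ℕ) : minrot x ≤ rot x c := by
  rcases eq_or_ne x [] with rfl | hx
  · rw [rot_nil]; exact le_refl _
  · have hL : 0 < x.length := List.length_pos_iff.2 hx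
    rw [← rot_mod]
    exact foldr_min_le_mem _ (List.mem_map_of_mem (List.mem_range.2 (Nat.mod_lt _ hL)))

theorem exists_rot_minrot (x : List α) : ∃ c, minrot x = rot x c := by
  rcases foldr_min_mem ((List.range x.length).map (rot x)) x with h | h
  · exact ⟨0, by rw [rot_zero]; exact h⟩
  · obtain ⟨c, _, hc⟩ := List.mem_map.mp h
    exact ⟨c, hc.symm⟩

@[simp] theorem length_minrot (x : List α) : (minrot x).length = x.length := by
  obtain ⟨c, hc⟩ := exists_rot_minrot x
  rw [hc, length_rot]

theorem le_rot_of_selfMinimal {x : List α} (h : SelfMinimal x) (c : ℕ) : x ≤ rot x c := by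
  conv_lhs => rw [← h]
  exact minrot_le_rot x c

theorem selfMinimal_of_le_rot {x : List α} (h : ∀ c, x ≤ rot x c) : SelfMinimal x := by
  obtain ⟨c, hc⟩ := exists_rot_minrot x
  exact le_antisymm (minrot_le_self x) (hc ▸ h c)

theorem minrot_rot (x : List α) (c : ℕ) : minrot (rot x c) = minrot x := by
  apply le_antisymm
  · obtain ⟨m, hm⟩ := exists_rot_inv x c
    obtain ⟨c₂, hc₂⟩ := exists_rot_minrot x
    calc minrot (rot x c) ≤ rot (rot x c) (m + c₂) := minrot_le_rot _ _
    _ = rot x c₂ := by rw [← rot_rot, hm]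
    _ = minrot x := hc₂.symm
  · obtain ⟨c₁, hc₁⟩ := exists_rot_minrot (rot x c)
    rw [hc₁, rot_rot]
    exact minrot_le_rot x _

theorem selfMinimal_minrot (x : List α) : SelfMinimal (minrot x) := by
  obtain ⟨c, hc⟩ := exists_rot_minrot x
  unfold SelfMinimal
  rw [hc, minrot_rot]
  exact hc

theorem selfMinimal_power {u : List α} (h : SelfMinimal u) (k : ℕ) :
    SelfMinimal (power u k) := by
  apply selfMinimal_of_le_rot
  intro c
  rw [rot_power]
  exact power_le_power (length_rot u c).symm (le_rot_of_selfMinimal h c) k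

end Order

/-! ### Primitivity -/

theorem comm_append_aux : ∀ (n : ℕ) (u v : List α), u.length + v.length ≤ n →
    u ++ v = v ++ u → ∃ (p : List α) (a b : ℕ), u = power p a ∧ v = power p b := by
  intro n
  induction n with
  | zero =>
    intro u v hn _
    have hu : u = [] := List.length_eq_zero_iff.mp (by omega)
    have hv : v = [] := List.length_eq_zero_iff.mp (by omega)
    subst hu; subst hv
    exact ⟨[], 0, 0, rfl, rfl⟩
  | succ n ih =>
    intro u v hn h
    rcases eq_or_ne u [] with rfl | hu
    · exact ⟨v, 0, 1, (power_zero v).symm, (power_one v).symm⟩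
    rcases eq_or_ne v [] with rfl | hv
    · exact ⟨u, 1, 0, (power_one u).symm, (power_zero u).symm⟩
    have hu' : 0 < u.length := List.length_pos_iff.2 hu
    have hv' : 0 < v.length := List.length_pos_iff.2 hv
    rcases le_or_gt u.length v.length with hle | hlt
    · have hpre : u <+: v :=
        List.prefix_of_prefix_length_le (h ▸ List.prefix_append u v) (List.prefix_append v u) hle
      obtain ⟨v', rfl⟩ := hpre
      have h' : u ++ v' = v' ++ u :=
        List.append_cancel_left (h.trans (List.append_assoc u v' u))
      have hlen : u.length + v'.length ≤ n := by
        have := List.length_append (as := u) (bs := v')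
        omega
      obtain ⟨p, a, b, hup, hvp⟩ := ih u v' hlen h'
      exact ⟨p, a, a + b, hup, by rw [power_add, hup, hvp]⟩
    · have hpre : v <+: u :=
        List.prefix_of_prefix_length_le (h.symm ▸ List.prefix_append v u)
          (List.prefix_append u v) hlt.le
      obtain ⟨u', rfl⟩ := hpre
      have h' : v ++ u' = u' ++ v :=
        List.append_cancel_left (h.symm.trans (List.append_assoc v u' v))
      have hlen : v.length + u'.length ≤ n := by
        have := List.length_append (as := v) (bs := u')
        omega
      obtain ⟨p, a, b, hvp, hup⟩ := ih v u' hlen h'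
      exact ⟨p, a + b, a, by rw [power_add, hvp, hup], hvp⟩

theorem comm_append (u v : List α) (h : u ++ v = v ++ u) :
    ∃ (p : List α) (a b : ℕ), u = power p a ∧ v = power p b :=
  comm_append_aux (u.length + v.length) u v le_rfl h

theorem not_primitive_of_rot_eq {l : List α} {c : ℕ} (hl : l ≠ [])
    (hc : c % l.length ≠ 0) (h : rot l c = l) : ¬ Primitive l := by
  intro hprim
  have hL : 0 < l.length := List.length_pos_iff.2 hl
  set r := c % l.length with hr
  have hr1 : 0 < r := Nat.pos_of_ne_zero hc
  have hr2 : r < l.length := Nat.mod_lt _ hL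
  have hcomm : l.drop r ++ l.take r = l.take r ++ l.drop r := by
    have h1 : l.drop r ++ l.take r = l := h
    rw [h1, List.take_append_drop]
  obtain ⟨p, a, b, hdp, htp⟩ := comm_append _ _ hcomm
  have hl2 : l = power p (b + a) := by
    rw [power_add, ← htp, ← hdp, List.take_append_drop]
  have htne : l.take r ≠ [] := by
    intro hh
    have := congrArg List.length hh
    simp only [List.length_take, List.length_nil] at this
    omega
  have hdne : l.drop r ≠ [] := by
    intro hh
    have := congrArg List.length hh
    simp only [List.length_drop, List.length_nil] at this
    omega
  have ha : 0 < a := by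
    rcases Nat.eq_zero_or_pos a with rfl | ha
    · exact absurd (hdp.trans (power_zero p)) hdne
    · exact ha
  have hb : 0 < b := by
    rcases Nat.eq_zero_or_pos b with rfl | hb
    · exact absurd (htp.trans (power_zero p)) htne
    · exact hb
  have hpl : p = l := hprim p (b + a) (by omega) hl2
  have := congrArg List.length hl2
  rw [length_power, hpl] at this
  nlinarith

theorem exists_primitive_root_aux : ∀ (n : ℕ) (x : List α), x.length ≤ n → x ≠ [] →
    ∃ p k, Primitive p ∧ 0 < k ∧ x = power p k := by
  intro n
  induction n with
  | zero =>
    intro x hx hne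
    exact absurd (List.length_eq_zero_iff.mp (by omega)) hne
  | succ n ih =>
    intro x hxn hx
    by_cases hp : Primitive x
    · exact ⟨x, 1, hp, one_pos, (power_one x).symm⟩
    · simp only [Primitive, not_forall] at hp
      obtain ⟨u, k, hk, hxu, hne⟩ := hp
      have hu : u ≠ [] := by
        rintro rfl
        rw [power_nil] at hxu
        exact hx hxu
      have hk2 : 2 ≤ k := by
        rcases Nat.lt_or_ge k 2 with h | h
        · interval_cases k
          · exact absurd (hxu.trans (power_one u)).symm hne
        · exact h
      have hu' : 0 < u.length := List.length_pos_iff.2 hu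
      have hlen : x.length = k * u.length := by rw [hxu, length_power]
      have hult : u.length ≤ n := by nlinarith
      obtain ⟨p, j, hpp, hj, hup⟩ := ih u hult hu
      exact ⟨p, k * j, hpp, by positivity, by rw [hxu, hup, power_power]⟩

theorem exists_primitive_root (x : List α) (hx : x ≠ []) :
    ∃ p k, Primitive p ∧ 0 < k ∧ x = power p k :=
  exists_primitive_root_aux x.length x le_rfl hx

theorem exists_lyndon_root [LinearOrder α] {x : List α} (hx : x ≠ [])
    (hsm : SelfMinimal x) : ∃ ℓ k, IsLyndon ℓ ∧ 0 < k ∧ x = power ℓ k := by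
  obtain ⟨p, k, hpp, hk, rfl⟩ := exists_primitive_root x hx
  have hp : p ≠ [] := by rintro rfl; rw [power_nil] at hx; exact hx rfl
  refine ⟨p, k, ⟨hp, hpp, ?_⟩, hk, rfl⟩
  apply selfMinimal_of_le_rot
  intro c
  by_contra hlt
  push_neg at hlt
  have h2 : power (rot p c) k < power p k :=
    power_lt_power (length_rot p c) hlt hk
  rw [← rot_power] at h2
  exact absurd (le_rot_of_selfMinimal hsm c) (not_le.2 h2)

theorem lyndon_root_unique_aux [LinearOrder α] {ℓ ℓ' : List α} {a b : ℕ}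
    (hℓ : IsLyndon ℓ) (hℓ' : IsLyndon ℓ') (ha : 0 < a) (hb : 0 < b)
    (h : power ℓ a = power ℓ' b) (hle : ℓ.length ≤ ℓ'.length) : ℓ = ℓ' := by
  obtain ⟨hne, hprim, -⟩ := hℓ
  obtain ⟨hne', hprim', -⟩ := hℓ'
  have he : 0 < ℓ.length := List.length_pos_iff.2 hne
  have he' : 0 < ℓ'.length := List.length_pos_iff.2 hne'
  have hlen : a * ℓ.length = b * ℓ'.length := by
    have := congrArg List.length h
    rwa [length_power, length_power] at this
  rcases eq_or_lt_of_le hle with heq | hlt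
  · calc ℓ = (power ℓ a).take ℓ.length := (take_power ha).symm
      _ = (power ℓ' b).take ℓ'.length := by rw [h, heq]
      _ = ℓ' := take_power hb
  · rcases eq_or_lt_of_le (Nat.one_le_iff_ne_zero.2 hb.ne') with hb1 | hb2
    · exact hprim' ℓ a ha (by rw [h, ← hb1, power_one])
    · exfalso
      have hm1 : ∀ j, j < b * ℓ'.length →
          (power ℓ' b)[j]? = ℓ'[j % ℓ'.length]? := fun j hj => getElem?_power he' hj
      have hm2 : ∀ j, j < a * ℓ.length →
          (power ℓ' b)[j]? = ℓ[j % ℓ.length]? := fun j hj => by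
        rw [← h]; exact getElem?_power he hj
      have hrot : rot ℓ' ℓ.length = ℓ' := by
        apply List.ext_getElem?
        intro i
        rcases lt_or_ge i ℓ'.length with hi | hi
        · have hstep1 : (rot ℓ' ℓ.length)[i]? = ℓ'[(i + ℓ.length) % ℓ'.length]? := by
            rw [rot_eq_rotate]; exact List.getElem?_rotate hi
          have hilt : i + ℓ.length < b * ℓ'.length := by nlinarith
          have hstep3 : (power ℓ' b)[i + ℓ.length]? = ℓ'[(i + ℓ.length) % ℓ'.length]? :=
            hm1 _ hilt
          have hstep4 : (power ℓ' b)[i + ℓ.length]? = ℓ[i % ℓ.length]? := by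
            rw [hm2 _ (by omega), Nat.add_mod_right]
          have hstep5 : (power ℓ' b)[i]? = ℓ[i % ℓ.length]? := hm2 _ (by omega)
          have hstep6 : (power ℓ' b)[i]? = ℓ'[i]? := by
            rw [hm1 _ (by nlinarith), Nat.mod_eq_of_lt hi]
          calc (rot ℓ' ℓ.length)[i]? = ℓ'[(i + ℓ.length) % ℓ'.length]? := hstep1
            _ = (power ℓ' b)[i + ℓ.length]? := hstep3.symm
            _ = ℓ[i % ℓ.length]? := hstep4
            _ = (power ℓ' b)[i]? := hstep5.symm
            _ = ℓ'[i]? := hstep6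
        · rw [List.getElem?_eq_none, List.getElem?_eq_none hi]
          rw [length_rot]; exact hi
      exact not_primitive_of_rot_eq hne'
        (by rw [Nat.mod_eq_of_lt hlt]; omega) hrot hprim'

theorem lyndon_root_unique [LinearOrder α] {ℓ ℓ' : List α} {a b : ℕ}
    (hℓ : IsLyndon ℓ) (hℓ' : IsLyndon ℓ') (ha : 0 < a) (hb : 0 < b)
    (h : power ℓ a = power ℓ' b) : ℓ = ℓ' := by
  rcases le_total ℓ.length ℓ'.length with hle | hle
  · exact lyndon_root_unique_aux hℓ hℓ' ha hb h hle
  · exact (lyndon_root_unique_aux hℓ' hℓ hb ha h.symm hle).symm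

theorem rot_power_inj [LinearOrder α] {ℓ : List α} {k : ℕ} (hℓ : IsLyndon ℓ) (hk : 0 < k)
    {r r' : ℕ} (hr : r < ℓ.length) (hr' : r' < ℓ.length)
    (h : rot (power ℓ k) r = rot (power ℓ k) r') : r = r' := by
  have hne := hℓ.1
  have he : 0 < ℓ.length := List.length_pos_iff.2 hne
  have h1 : power (rot ℓ r) k = power (rot ℓ r') k := by
    rw [← rot_power, ← rot_power, h]
  have h2 : rot ℓ r = rot ℓ r' := by
    calc rot ℓ r = (power (rot ℓ r) k).take (rot ℓ r).length := (take_power hk).symm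
      _ = (power (rot ℓ r') k).take (rot ℓ r').length := by rw [h1, length_rot, length_rot]
      _ = rot ℓ r' := take_power hk
  by_contra hner
  have h3 : rot ℓ (r + (ℓ.length - r')) = rot ℓ (r' + (ℓ.length - r')) := by
    rw [← rot_rot, ← rot_rot, h2]
  have h4 : rot ℓ (r' + (ℓ.length - r')) = ℓ := by
    rw [Nat.add_sub_cancel' hr'.le, ← rot_mod, Nat.mod_self, rot_zero]
  have h5 : (r + (ℓ.length - r')) % ℓ.length ≠ 0 := by
    rcases lt_trichotomy r r' with hlt | heq | hgt
    · rw [Nat.mod_eq_of_lt (by omega)]; omega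
    · exact absurd heq hner
    · have : r + (ℓ.length - r') = ℓ.length + (r - r') := by omega
      rw [this, Nat.add_mod_left, Nat.mod_eq_of_lt (by omega)]
      omega
  exact not_primitive_of_rot_eq hne h5 (h3.trans h4) hℓ.2.1

/-! ### The key prefix lemma -/

section Key
variable [LinearOrder α]

theorem power_le_take_step {w ℓ : List α} {n : ℕ} (hw : w.length = n) (hsm : SelfMinimal w)
    (hℓ : ℓ ≠ []) (k : ℕ) (hk : 0 < k) (hkn : (k + 1) * ℓ.length ≤ n) :
    (power ℓ k ≤ w.take (k * ℓ.length) ↔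
      power ℓ (k + 1) ≤ w.take ((k + 1) * ℓ.length)) := by
  have he : 0 < ℓ.length := List.length_pos_iff.2 hℓ
  have hke : k * ℓ.length + ℓ.length ≤ n := by nlinarith
  have hlenA : (power ℓ k).length = k * ℓ.length := length_power ℓ k
  have hlen_take : (w.take (k * ℓ.length)).length = k * ℓ.length := by
    rw [List.length_take]; omega
  have hsplit : w.take ((k + 1) * ℓ.length)
      = w.take (k * ℓ.length) ++ (w.drop (k * ℓ.length)).take ℓ.length := by
    rw [show (k + 1) * ℓ.length = k * ℓ.length + ℓ.length by ring, List.take_add]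
  set B := (w.drop (k * ℓ.length)).take ℓ.length with hB
  have hlenB : B.length = ℓ.length := by
    rw [hB, List.length_take, List.length_drop, hw]; omega
  have hps : power ℓ (k + 1) = power ℓ k ++ ℓ := power_succ' ℓ k
  constructor
  · intro h1
    rcases lt_or_eq_of_le h1 with hlt | heq
    · rw [hps, hsplit]
      exact le_of_lt (lt_append_of_lt (by rw [hlenA, hlen_take]) hlt _ _)
    · have hwe : w.take ℓ.length = ℓ := by
        have h2 : (w.take (k * ℓ.length)).take ℓ.length = ℓ := by
          rw [← heq]; exact take_power hk
        rw [List.take_take, min_eq_left (Nat.le_mul_of_pos_left ℓ.length hk)] at h2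
        exact h2
      have hBl : ℓ ≤ B := by
        by_contra hBlt
        push_neg at hBlt
        have hrot := le_rot_of_selfMinimal hsm (k * ℓ.length)
        have hkemod : (k * ℓ.length) % w.length = k * ℓ.length := by
          rw [hw]; exact Nat.mod_eq_of_lt (by omega)
        have hrw : rot w (k * ℓ.length)
            = B ++ ((w.drop (k * ℓ.length)).drop ℓ.length ++ w.take (k * ℓ.length)) := by
          rw [rot, hkemod, ← List.append_assoc, hB, List.take_append_drop]
        have hww : w = ℓ ++ w.drop ℓ.length := by
          have h3 := (List.take_append_drop ℓ.length w).symm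
          rwa [hwe] at h3
        have hcon : rot w (k * ℓ.length) < w := by
          rw [hrw]
          conv_rhs => rw [hww]
          exact lt_append_of_lt (by rw [hlenB]) hBlt _ _
        exact absurd hrot (not_le.2 hcon)
      rw [hps, hsplit]
      exact le_append_of_le (by rw [hlenA, hlen_take]) h1 hBl
  · intro h1
    by_contra h2
    push_neg at h2
    have hcon : w.take ((k + 1) * ℓ.length) < power ℓ (k + 1) := by
      rw [hps, hsplit]
      exact lt_append_of_lt (by rw [hlen_take, hlenA]) h2 _ _
    exact absurd h1 (not_le.2 hcon)

theorem power_le_take_all {w ℓ : List α} {n : ℕ} (hw : w.length = n) (hsm : SelfMinimal w)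
    (hℓ : ℓ ≠ []) : ∀ (k : ℕ), 0 < k → k * ℓ.length ≤ n →
    (power ℓ k ≤ w.take (k * ℓ.length) ↔ ℓ ≤ w.take ℓ.length) := by
  intro k
  induction k with
  | zero => omega
  | succ k ih =>
    intro _ hkn
    rcases Nat.eq_zero_or_pos k with rfl | hk
    · rw [show 0 + 1 = 1 by rfl, power_one, one_mul]
    · rw [← power_le_take_step hw hsm hℓ k hk hkn]
      exact ih hk (by nlinarith)

theorem power_le_take_key {w ℓ : List α} {n d : ℕ} (hw : w.length = n) (hsm : SelfMinimal w)
    (hℓ : ℓ ≠ []) (hed : ℓ.length ∣ d) (hdn : d ∣ n) (hd : 0 < d) (hn : 0 < n) :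
    (power ℓ (d / ℓ.length) ≤ w.take d ↔ power ℓ (n / ℓ.length) ≤ w) := by
  have he : 0 < ℓ.length := List.length_pos_iff.2 hℓ
  have hen : ℓ.length ∣ n := hed.trans hdn
  have h1 : d / ℓ.length * ℓ.length = d := Nat.div_mul_cancel hed
  have h2 : n / ℓ.length * ℓ.length = n := Nat.div_mul_cancel hen
  have hdln : d ≤ n := Nat.le_of_dvd hn hdn
  have hd1 : 0 < d / ℓ.length := Nat.div_pos (Nat.le_of_dvd hd hed) he
  have hn1 : 0 < n / ℓ.length := Nat.div_pos (Nat.le_of_dvd hn hen) he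
  have hA := power_le_take_all hw hsm hℓ (d / ℓ.length) hd1 (by rw [h1]; exact hdln)
  have hB := power_le_take_all hw hsm hℓ (n / ℓ.length) hn1 (by rw [h2])
  rw [h1] at hA
  rw [h2] at hB
  have htn : w.take n = w := by rw [← hw]; exact List.take_length
  rw [htn] at hB
  rw [hA, hB]

end Key

/-! ### Counting -/

section Counting
variable (α) [LinearOrder α] [Fintype α]

/-- The finset of all words of length `d`. -/
def wordFinset (d : ℕ) : Finset (List α) :=
  Finset.univ.image (List.ofFn : (Fin d → α) → List α)

theorem mem_wordFinset {d : ℕ} {x : List α} : x ∈ wordFinset α d ↔ x.length = d := by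
  constructor
  · intro hx
    obtain ⟨f, -, rfl⟩ := Finset.mem_image.mp hx
    exact List.length_ofFn
  · rintro rfl
    exact Finset.mem_image.mpr ⟨x.get, Finset.mem_univ _, List.ofFn_get x⟩

theorem ncard_eq_filter_card {d : ℕ} (P : List α → Prop) [DecidablePred P] :
    {x : List α | x.length = d ∧ P x}.ncard = ((wordFinset α d).filter P).card := by
  rw [← Set.ncard_coe_finset]
  congr 1
  ext x
  simp [mem_wordFinset]

open scoped Classical in
theorem card_cs {w : List α} {n : ℕ} (hn : 0 < n) (hw : w.length = n) (hsm : SelfMinimal w)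
    {d : ℕ} (hd : 0 < d) (hdn : d ∣ n) :
    ((wordFinset α d).filter (fun x => minrot x ≤ w.take d)).card
      = ∑ e ∈ d.divisors,
        ((wordFinset α e).filter (fun ℓ => IsLyndon ℓ ∧ power ℓ (n / e) ≤ w)).card * e := by
  have hstep : ∀ e ∈ d.divisors,
      ((wordFinset α e).filter (fun ℓ => IsLyndon ℓ ∧ power ℓ (n / e) ≤ w)).card * e
      = (((wordFinset α e).filter (fun ℓ => IsLyndon ℓ ∧ power ℓ (n / e) ≤ w))
          ×ˢ Finset.range e).card := by
    intro e _
    rw [Finset.card_product, Finset.card_range]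
  rw [Finset.sum_congr rfl hstep, ← Finset.card_sigma]
  symm
  apply Finset.card_bij (fun (p : (_ : ℕ) × (List α × ℕ)) _ => rot (power p.2.1 (d / p.1)) p.2.2)
  · rintro ⟨e, ℓ, r⟩ hp
    simp only [Finset.mem_sigma, Finset.mem_product, Finset.mem_filter, Finset.mem_range,
      mem_wordFinset, Nat.mem_divisors] at hp
    obtain ⟨⟨hed, -⟩, ⟨⟨he, hℓ, hple⟩, hr⟩⟩ := hp
    subst he
    have he0 : 0 < ℓ.length := List.length_pos_iff.2 hℓ.1
    have hk : 0 < d / ℓ.length := Nat.div_pos (Nat.le_of_dvd hd hed) he0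
    simp only [Finset.mem_filter, mem_wordFinset]
    constructor
    · rw [length_rot, length_power, Nat.div_mul_cancel hed]
    · have hmr : minrot (rot (power ℓ (d / ℓ.length)) r) = power ℓ (d / ℓ.length) := by
        rw [minrot_rot]
        exact selfMinimal_power hℓ.2.2 _
      rw [hmr]
      exact (power_le_take_key hw hsm hℓ.1 hed hdn hd hn).mpr hple
  · rintro ⟨e, ℓ, r⟩ hp ⟨e', ℓ', r'⟩ hp' heq
    simp only [Finset.mem_sigma, Finset.mem_product, Finset.mem_filter, Finset.mem_range,
      mem_wordFinset, Nat.mem_divisors] at hp hp'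
    obtain ⟨⟨hed, -⟩, ⟨⟨he, hℓ, -⟩, hr⟩⟩ := hp
    obtain ⟨⟨hed', -⟩, ⟨⟨he', hℓ', -⟩, hr'⟩⟩ := hp'
    subst he
    subst he'
    have he0 : 0 < ℓ.length := List.length_pos_iff.2 hℓ.1
    have he0' : 0 < ℓ'.length := List.length_pos_iff.2 hℓ'.1
    have hk : 0 < d / ℓ.length := Nat.div_pos (Nat.le_of_dvd hd hed) he0
    have hk' : 0 < d / ℓ'.length := Nat.div_pos (Nat.le_of_dvd hd hed') he0'
    have hmeq : power ℓ (d / ℓ.length) = power ℓ' (d / ℓ'.length) := by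
      have h1 : minrot (rot (power ℓ (d / ℓ.length)) r) = power ℓ (d / ℓ.length) := by
        rw [minrot_rot]; exact selfMinimal_power hℓ.2.2 _
      have h2 : minrot (rot (power ℓ' (d / ℓ'.length)) r') = power ℓ' (d / ℓ'.length) := by
        rw [minrot_rot]; exact selfMinimal_power hℓ'.2.2 _
      rw [← h1, ← h2, heq]
    obtain rfl : ℓ = ℓ' := lyndon_root_unique hℓ hℓ' hk hk' hmeq
    have hreq : r = r' := by
      apply rot_power_inj hℓ hk hr hr'
      rw [heq]
    subst hreq
    rfl
  · intro x hx
    simp only [Finset.mem_filter, mem_wordFinset] at hx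
    obtain ⟨hxd, hxle⟩ := hx
    have hmne : minrot x ≠ [] := by
      intro hh
      have := congrArg List.length hh
      rw [length_minrot, hxd] at this
      simp at this
      omega
    obtain ⟨ℓ, k, hℓ, hk, hmp⟩ := exists_lyndon_root hmne (selfMinimal_minrot x)
    have he0 : 0 < ℓ.length := List.length_pos_iff.2 hℓ.1
    have hdke : d = k * ℓ.length := by
      rw [← hxd, ← length_minrot x, hmp, length_power]
    have hed : ℓ.length ∣ d := ⟨k, by rw [hdke, mul_comm]⟩
    have hkd : k = d / ℓ.length := by rw [hdke, Nat.mul_div_cancel _ he0]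
    obtain ⟨c₀, hc₀⟩ := exists_rot_minrot x
    obtain ⟨c, hc⟩ := exists_rot_inv x c₀
    rw [← hc₀] at hc
    have hr : c % ℓ.length < ℓ.length := Nat.mod_lt _ he0
    have hrx : rot (minrot x) (c % ℓ.length) = x := by
      rw [hmp, rot_power, rot_mod, ← rot_power, ← hmp, hc]
    refine ⟨⟨ℓ.length, ℓ, c % ℓ.length⟩, ?_, ?_⟩
    · rw [Finset.mem_sigma]
      refine ⟨Nat.mem_divisors.mpr ⟨hed, hd.ne'⟩, ?_⟩
      rw [Finset.mem_product]
      refine ⟨?_, Finset.mem_range.mpr hr⟩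
      rw [Finset.mem_filter]
      refine ⟨(mem_wordFinset α).mpr rfl, hℓ, ?_⟩
      apply (power_le_take_key hw hsm hℓ.1 hed hdn hd hn).mp
      rw [← hkd, ← hmp]
      exact hxle
    · rw [← hkd, ← hmp]
      exact hrx

end Counting


/-- If `w` is a self-minimal word of length `n ≥ 1`, then
`n · Lynd(w) = Σ_{d ∣ n} μ(n/d) · |CS(w_(d))|`, where `Lynd(w)` is the number of
Lyndon words of length `n` that are `≤ w`, and `CS(v) = {x : |x| = |v|, minrot(x) ≤ v}`. -/
theorem stmt_6 [LinearOrder α] [Fintype α] [Nonempty α]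
    (w : List α) (n : ℕ) (hn : 1 ≤ n) (hw : w.length = n) (hsm : SelfMinimal w) :
    (n : ℤ) * ({l : List α | IsLyndon l ∧ l.length = n ∧ l ≤ w}.ncard : ℤ) =
      ∑ d ∈ n.divisors, ArithmeticFunction.moebius (n / d) *
        ({x : List α | x.length = d ∧ minrot x ≤ w.take d}.ncard : ℤ) := by
  classical
  have hn0 : 0 < n := hn
  have hLy : ({l : List α | IsLyndon l ∧ l.length = n ∧ l ≤ w}.ncard : ℤ)
      = (((wordFinset α n).filter
          (fun ℓ => IsLyndon ℓ ∧ power ℓ (n / n) ≤ w)).card : ℤ) := by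
    congr 1
    rw [← ncard_eq_filter_card]
    congr 1
    ext l
    simp only [Set.mem_setOf_eq, Nat.div_self hn0, power_one]
    tauto
  have hinv := (ArithmeticFunction.sum_eq_iff_sum_smul_moebius_eq_on
      (f := fun e => ((((wordFinset α e).filter
        (fun ℓ => IsLyndon ℓ ∧ power ℓ (n / e) ≤ w)).card * e : ℕ) : ℤ))
      (g := fun d => (((wordFinset α d).filter
        (fun x => minrot x ≤ w.take d)).card : ℤ))
      {m | m ∣ n} (fun m m' hmm' hm' => hmm'.trans hm')).mp
      (fun d hd hdn => by exact_mod_cast (card_cs α hn0 hw hsm hd hdn).symm)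
      n hn0 (dvd_refl n)
  rw [Nat.sum_divisorsAntidiagonal' (f := fun x y => (ArithmeticFunction.moebius x)
      • (((wordFinset α y).filter (fun x' => minrot x' ≤ w.take y)).card : ℤ))] at hinv
  have hsummand : ∀ d ∈ n.divisors,
      (ArithmeticFunction.moebius (n / d) : ℤ)
        * ({x : List α | x.length = d ∧ minrot x ≤ w.take d}.ncard : ℤ)
      = (ArithmeticFunction.moebius (n / d))
        • (((wordFinset α d).filter (fun x => minrot x ≤ w.take d)).card : ℤ) := by
    intro d _
    rw [ncard_eq_filter_card, smul_eq_mul]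
  rw [Finset.sum_congr rfl hsummand, hinv, hLy]
  push_cast
  ring

end Lyndon
end

section
/- Let w be a self-minimal word of length n ≥ 1 over Σ, and let A be the deterministic automaton for w with states {0, 1, ..., n-1} ∪ {AC}, initial state 0, and transition function δ given by: δ(AC, c) = AC for all c ∈ Σ; and for 0 ≤ i ≤ n-1, δ(i, c) = 0 if c > w[i+1], δ(i, c) = i+1 if c = w[i+1] and i ≠ n-1, and δ(i, c) = AC otherwise (i.e., if c < w[i+1], or c = w[i+1] and i = n-1). Let δ* denote the extension of δ to words (reading letters left to right). Then for every word x over Σ: if x ∈ L(w) then δ*(0, x) = AC; otherwise δ*(0, x) = i, where w_(i) is the longest prefix of w that is a suffix of x. -/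
namespace Lyndon

variable {α : Type*}

/-- The transition function of the automaton `A` for `w`: states are `0, …, |w|-1`
together with the accepting state `AC`, represented by `|w|`. -/
def delta [LinearOrder α] (w : List α) (q : ℕ) (c : α) : ℕ :=
  if h : q < w.length then
    if w.get ⟨q, h⟩ < c then 0
    else if c = w.get ⟨q, h⟩ ∧ q ≠ w.length - 1 then q + 1
    else w.length
  else w.length

/-- The extension of `delta` to words (reading letters left to right). -/
def deltaStar [LinearOrder α] (w : List α) (q : ℕ) (x : List α) : ℕ :=
  x.foldl (delta w) q

private lemma foldr_min_le {β : Type*} [LinearOrder β] (b : β) (l : List β) :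
    ∀ a ∈ l, l.foldr min b ≤ a := by
  induction l with
  | nil => simp
  | cons h t ih =>
    intro a ha
    rcases List.mem_cons.1 ha with rfl | ha
    · exact min_le_left _ _
    · exact le_trans (min_le_right _ _) (ih a ha)

private lemma le_rot [LinearOrder α] {w : List α} (hsm : SelfMinimal w) {c : ℕ}
    (hc : c < w.length) : w ≤ rot w c := by
  have hmem : rot w c ∈ (List.range w.length).map (rot w) :=
    List.mem_map.2 ⟨c, List.mem_range.2 hc, rfl⟩
  have h2 : minrot w ≤ rot w c := foldr_min_le w _ _ hmem
  rwa [hsm] at h2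

private lemma lex_lt_of_take [LinearOrder α] (i : ℕ) :
    ∀ (a b : List α), a.take i = b.take i →
      ∀ (ha : i < a.length) (hb : i < b.length), a[i] < b[i] → a < b := by
  induction i with
  | zero =>
    intro a b ht ha hb h
    match a, b with
    | x :: a', y :: b' => exact List.Lex.rel (by simpa using h)
  | succ i ih =>
    intro a b ht ha hb h
    match a, b with
    | x :: a', y :: b' =>
      simp only [List.take_succ_cons, List.cons.injEq] at ht
      obtain ⟨rfl, ht'⟩ := ht
      exact List.Lex.cons (ih a' b' ht' (by simpa using ha) (by simpa using hb)
        (by simpa using h))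

private lemma suffix_of_suffix_of_le {u v l : List α} (hu : u <:+ l) (hv : v <:+ l)
    (h : u.length ≤ v.length) : u <:+ v := by
  rw [← List.reverse_prefix] at hu hv ⊢
  exact List.prefix_of_prefix_length_le hu hv (by simpa)

private lemma concat_suffix_concat {u v : List α} {a b : α}
    (h : u ++ [a] <:+ v ++ [b]) : u <:+ v ∧ a = b := by
  obtain ⟨t, ht⟩ := h
  rw [← List.append_assoc] at ht
  obtain ⟨h1, h2⟩ := List.append_inj' ht (by simp)
  exact ⟨⟨t, h1⟩, by simpa using h2⟩

private lemma suffix_concat {u v : List α} (h : u <:+ v) (a : α) :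
    u ++ [a] <:+ v ++ [a] := by
  obtain ⟨t, rfl⟩ := h
  exact ⟨t, by simp⟩

private lemma take_succ_eq {w : List α} {j : ℕ} (h : j < w.length) :
    w.take (j + 1) = w.take j ++ [w[j]] := by
  rw [← List.take_concat_get h, List.concat_eq_append]

private lemma infix_concat_cases {z y : List α} {c : α} (h : z <:+: y ++ [c]) :
    z <:+: y ∨ z <:+ y ++ [c] := by
  obtain ⟨s, t, hst⟩ := h
  induction t using List.reverseRecOn with
  | nil => right; exact ⟨s, by simpa using hst⟩
  | append_singleton t' a _ =>
    left
    rw [show s ++ z ++ (t' ++ [a]) = (s ++ z ++ t') ++ [a] by simp] at hst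
    obtain ⟨h1, _⟩ := List.append_inj' hst (by simp)
    exact ⟨s, t', h1⟩

private lemma get_le_get [LinearOrder α] {w : List α} (hsm : SelfMinimal w)
    {i q : ℕ} (hq : q < w.length) (hiq : i ≤ q)
    (hsuf : w.take i <:+ w.take q) :
    w[i]'(lt_of_le_of_lt hiq hq) ≤ w[q]'hq := by
  rcases eq_or_lt_of_le hiq with rfl | hlt
  · exact le_refl _
  obtain ⟨c, rfl⟩ : ∃ c, q = c + i := ⟨q - i, by omega⟩
  have hclt : c < w.length := by omega
  have hle : w ≤ rot w c := le_rot hsm hclt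
  by_contra hgt
  push_neg at hgt
  have hmod : c % w.length = c := Nat.mod_eq_of_lt hclt
  obtain ⟨t, hts⟩ := hsuf
  have htl : t.length = c := by
    have := congrArg List.length hts
    simp only [List.length_append, List.length_take] at this
    omega
  have hdt : (w.take (c + i)).drop c = (w.drop c).take i := by
    rw [List.drop_take]
    congr 1
    omega
  have hlen2 : i ≤ (w.drop c).length := by
    simp only [List.length_drop]; omega
  have htake_eq : (rot w c).take i = w.take i := by
    rw [rot, hmod, List.take_append_of_le_length hlen2, ← hdt, ← hts, ← htl,
      List.drop_left]
  have hilt : i < (rot w c).length := by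
    simp only [rot, List.length_append, List.length_drop, List.length_take]
    omega
  have hget : (rot w c)[i]'hilt = w[c + i]'hq := by
    simp only [rot, hmod]
    rw [List.getElem_append_left (by simp only [List.length_drop]; omega)]
    exact List.getElem_drop
  have hlt2 : (rot w c)[i]'hilt < w[i]'(by omega) :=
    lt_of_le_of_lt (le_of_eq hget) hgt
  exact absurd (lex_lt_of_take i _ _ htake_eq hilt (by omega) hlt2) (not_lt.2 hle)

/-- For self-minimal `w` of length `n ≥ 1` and any word `x`: if `x ∈ L(w)` then the
automaton ends in `AC` after reading `x`; otherwise it ends in the state `i` such that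
`w_(i)` is the longest prefix of `w` that is a suffix of `x`. -/
theorem stmt_12 [LinearOrder α] [Fintype α] [Nonempty α]
    (w : List α) (n : ℕ) (hn : 1 ≤ n) (hw : w.length = n) (hsm : SelfMinimal w)
    (x : List α) :
    (InL w x → deltaStar w 0 x = n) ∧
    (¬ InL w x →
      deltaStar w 0 x < n ∧
      w.take (deltaStar w 0 x) <:+ x ∧
      ∀ j ≤ n, w.take j <:+ x → j ≤ deltaStar w 0 x) := by
  subst hw
  induction x using List.reverseRecOn with
  | nil =>
    constructor
    · rintro ⟨z, hz, hinf⟩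
      rw [List.infix_nil] at hinf
      subst hinf
      rcases (hz : _ ∨ _) with ⟨i, s, _, hz⟩ | hz
      · exact absurd hz.symm (by simp)
      · rw [← hz] at hn; simp at hn
    · intro _
      refine ⟨by simp only [deltaStar, List.foldl_nil]; omega, by simp [deltaStar], ?_⟩
      intro j hj hsuf
      rw [List.suffix_nil] at hsuf
      have := congrArg List.length hsuf
      simp only [List.length_take, List.length_nil] at this
      simp only [deltaStar, List.foldl_nil]
      omega
  | append_singleton y c ih =>
    have hstep : deltaStar w 0 (y ++ [c]) = delta w (deltaStar w 0 y) c := by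
      simp [deltaStar, List.foldl_append]
    by_cases hIn : InL w y
    · have hs : deltaStar w 0 y = w.length := ih.1 hIn
      have hIn' : InL w (y ++ [c]) := by
        obtain ⟨z, hz, hinf⟩ := hIn
        exact ⟨z, hz, hinf.trans ⟨[], [c], by simp⟩⟩
      refine ⟨fun _ => ?_, fun h => absurd hIn' h⟩
      rw [hstep, hs, delta]
      simp
    · obtain ⟨hqlt, hqsuf, hqmax⟩ := ih.2 hIn
      generalize hqdef : deltaStar w 0 y = q at hqlt hqsuf hqmax hstep
      have hF : ∀ i (hi : i < w.length), w.take i <:+ y →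
          i ≤ q ∧ w[i]'hi ≤ w[q]'hqlt := by
        intro i hi hsy
        have hiq : i ≤ q := hqmax i (le_of_lt hi) hsy
        have hst : w.take i <:+ w.take q :=
          suffix_of_suffix_of_le hsy hqsuf
            (by simp only [List.length_take]; omega)
        exact ⟨hiq, get_le_get hsm hqlt hiq hst⟩
      have hlen1 : w.length - 1 < w.length := by omega
      have hw1 : w = w.take (w.length - 1) ++ [w[w.length - 1]'hlen1] := by
        have h2 := take_succ_eq hlen1
        rw [show w.length - 1 + 1 = w.length from by omega, List.take_length] at h2
        exact h2
      have hsuffix_cases : ∀ z ∈ PrefMinus w, z <:+ y ++ [c] →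
          c < w[q]'hqlt ∨ (c = w[q]'hqlt ∧ q = w.length - 1) := by
        intro z hz hzs
        · rcases (hz : _ ∨ _) with ⟨i, s, hslt, hzw⟩ | hzw
          case inl =>
            rw [hzw] at hzs
            obtain ⟨hty, rfl⟩ := concat_suffix_concat hzs
            obtain ⟨hiq, hile⟩ := hF i.val i.isLt hty
            exact Or.inl (lt_of_lt_of_le hslt hile)
          case inr =>
            rw [hzw] at hzs
            have hzs' : w.take (w.length - 1) ++ [w[w.length - 1]'hlen1] <:+ y ++ [c] := by
              rw [← hw1]; exact hzs
            obtain ⟨hty, hc⟩ := concat_suffix_concat hzs'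
            obtain ⟨hiq, _⟩ := hF (w.length - 1) hlen1 hty
            have hq1 : q = w.length - 1 := by omega
            subst hq1
            exact Or.inr ⟨hc.symm, rfl⟩
      rw [hstep]
      rw [delta, dif_pos hqlt]
      simp only [List.get_eq_getElem]
      split_ifs with h1 h2
      · -- reset to 0 : w[q] < c
        have hnot : ¬ InL w (y ++ [c]) := by
          rintro ⟨z, hz, hinf⟩
          rcases infix_concat_cases hinf with hi | hs
          · exact hIn ⟨z, hz, hi⟩
          · rcases hsuffix_cases z hz hs with hlt | ⟨heq, _⟩
            · exact absurd h1 (not_lt.2 (le_of_lt hlt))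
            · rw [heq] at h1; exact lt_irrefl _ h1
        refine ⟨fun h => absurd h hnot, fun _ => ⟨by omega, by simp, ?_⟩⟩
        intro j hj hjs
        match j with
        | 0 => omega
        | j' + 1 =>
          have hj' : j' < w.length := by omega
          rw [take_succ_eq hj'] at hjs
          obtain ⟨hty, hc⟩ := concat_suffix_concat hjs
          obtain ⟨_, hile⟩ := hF j' hj' hty
          rw [hc] at hile
          exact absurd h1 (not_lt.2 hile)
      · -- advance to q+1 : c = w[q], q ≠ len - 1
        obtain ⟨hc, hq1⟩ := h2
        have hnot : ¬ InL w (y ++ [c]) := by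
          rintro ⟨z, hz, hinf⟩
          rcases infix_concat_cases hinf with hi | hs
          · exact hIn ⟨z, hz, hi⟩
          · rcases hsuffix_cases z hz hs with hlt | ⟨_, heq⟩
            · rw [hc] at hlt; exact lt_irrefl _ hlt
            · exact hq1 heq
        refine ⟨fun h => absurd h hnot, fun _ => ⟨by omega, ?_, ?_⟩⟩
        · rw [take_succ_eq hqlt, ← hc]
          exact suffix_concat hqsuf c
        · intro j hj hjs
          match j with
          | 0 => omega
          | j' + 1 =>
            have hj' : j' < w.length := by omega
            rw [take_succ_eq hj'] at hjs
            obtain ⟨hty, _⟩ := concat_suffix_concat hjs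
            obtain ⟨hjq, _⟩ := hF j' hj' hty
            omega
      · -- accept : c < w[q], or c = w[q] and q = len - 1
        have hIn' : InL w (y ++ [c]) := by
          rcases lt_or_eq_of_le (le_of_not_gt h1) with hlt | heq
          · exact ⟨w.take q ++ [c],
              Or.inl ⟨⟨q, hqlt⟩, c, hlt, rfl⟩,
              (suffix_concat hqsuf c).isInfix⟩
          · have hq1 : q = w.length - 1 := by
              by_contra hne
              exact h2 ⟨heq, hne⟩
            subst hq1
            refine ⟨w, Or.inr rfl, ?_⟩
            have h3 : w.take (w.length - 1) ++ [c] <:+ y ++ [c] := suffix_concat hqsuf c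
            have hceq : (w[w.length - 1]'hlen1) = c := heq.symm
            rw [hw1, hceq]
            exact h3.isInfix
        exact ⟨fun _ => rfl, fun h => absurd hIn' h⟩

end Lyndon
end
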